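/- Let $G$ be a graph and let $T$ be a normal tree for $G$ rooted at $r$ (a rooted tree on vertex set $V(G)$ such that the endpoints of every edge of $G$ are comparable in the tree order). For $v \in V(G)$ let $a_T(v)$ be the number of active ancestors of $v$: vertices $u <_T v$ such that some $z \ge_T v$ has $uz \in E(G)$. Then the treewidth of $G$ equals the minimum over all normal trees $T$ for $G$ of $\max_{v} a_T(v)$. -/

import Mathlib

/-- `(T, bag)` is a tree decomposition of `G`. -/
def IsTreeDecomp {V : Type*} (G : SimpleGraph V) {m : ℕ}
    (T : SimpleGraph (Fin m)) (bag : Fin m → Set V) : Prop :=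
  T.IsTree ∧ (∀ v : V, ∃ i, v ∈ bag i) ∧
    (∀ ⦃u v⦄, G.Adj u v → ∃ i, u ∈ bag i ∧ v ∈ bag i) ∧
    ∀ v : V, (T.induce {i | v ∈ bag i}).Connected

/-- The treewidth of `G`: the least `k` admitting a tree decomposition with all
bags of size at most `k + 1`. -/
noncomputable def treewidth {V : Type*} (G : SimpleGraph V) : ℕ :=
  sInf {k | ∃ (m : ℕ) (T : SimpleGraph (Fin m)) (bag : Fin m → Set V),
    IsTreeDecomp G T bag ∧ ∀ i, (bag i).ncard ≤ k + 1}

/-- `u ≤_T v` in the tree order of `T` rooted at `r`: `u` lies on the path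
from `r` to `v`. -/
def TreeLe {V : Type*} (T : SimpleGraph V) (r u v : V) : Prop :=
  ∃ p : T.Walk r v, p.IsPath ∧ u ∈ p.support

/-- `T` (rooted at `r`) is a normal tree for `G`: `T` is a tree on the vertex
set of `G` and the endpoints of every edge of `G` are comparable. -/
def IsNormalTreeFor {V : Type*} (G T : SimpleGraph V) (r : V) : Prop :=
  T.IsTree ∧ ∀ ⦃u v⦄, G.Adj u v → TreeLe T r u v ∨ TreeLe T r v u

/-- The active ancestors of `v`: vertices `u <_T v` with an edge of `G` to some
`z ≥_T v`. -/
def activeAncestors {V : Type*} (G T : SimpleGraph V) (r v : V) : Set V :=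
  {u | u ≠ v ∧ TreeLe T r u v ∧ ∃ z, TreeLe T r v z ∧ G.Adj u z}


open SimpleGraph Walk

attribute [local instance 10] Classical.propDecidable

section RootedTree
variable {V : Type*} {T : SimpleGraph V}

noncomputable def pth (hT : T.IsTree) (u v : V) : T.Walk u v :=
  (hT.existsUnique_path u v).choose

lemma pth_isPath (hT : T.IsTree) (u v : V) : (pth hT u v).IsPath :=
  (hT.existsUnique_path u v).choose_spec.1

lemma pth_unique (hT : T.IsTree) {u v : V} {p : T.Walk u v} (hp : p.IsPath) :
    p = pth hT u v :=
  (hT.existsUnique_path u v).choose_spec.2 p hp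

lemma treeLe_iff (hT : T.IsTree) {r u v : V} :
    TreeLe T r u v ↔ u ∈ (pth hT r v).support := by
  constructor
  · rintro ⟨p, hp, hu⟩; rwa [pth_unique hT hp] at hu
  · intro h; exact ⟨pth hT r v, pth_isPath hT r v, h⟩

lemma treeLe_refl (hT : T.IsTree) (r v : V) : TreeLe T r v v :=
  (treeLe_iff hT).2 (end_mem_support _)

lemma root_treeLe (hT : T.IsTree) (r v : V) : TreeLe T r r v :=
  (treeLe_iff hT).2 (start_mem_support _)

lemma pth_self (hT : T.IsTree) (r : V) : pth hT r r = Walk.nil :=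
  (pth_unique hT IsPath.nil).symm

lemma treeLe_root (hT : T.IsTree) {r v : V} (h : TreeLe T r v r) : v = r := by
  rw [treeLe_iff hT, pth_self hT] at h
  simpa using h

lemma takeUntil_pth (hT : T.IsTree) {r v w : V} (h : v ∈ (pth hT r w).support) :
    (pth hT r w).takeUntil v h = pth hT r v :=
  pth_unique hT ((pth_isPath hT r w).takeUntil h)

lemma dropUntil_pth (hT : T.IsTree) {r v w : V} (h : v ∈ (pth hT r w).support) :
    (pth hT r w).dropUntil v h = pth hT v w :=
  pth_unique hT ((pth_isPath hT r w).dropUntil h)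

lemma treeLe_trans (hT : T.IsTree) {r u v w : V} (h1 : TreeLe T r u v)
    (h2 : TreeLe T r v w) : TreeLe T r u w := by
  rw [treeLe_iff hT] at h1 h2 ⊢
  rw [← takeUntil_pth hT h2] at h1
  exact support_takeUntil_subset _ h2 h1

lemma treeLe_antisymm (hT : T.IsTree) {r u v : V} (h1 : TreeLe T r u v)
    (h2 : TreeLe T r v u) : u = v := by
  rw [treeLe_iff hT] at h1 h2
  rw [← takeUntil_pth hT h2] at h1
  -- u ∈ support of (pth r u).takeUntil v; u is the end of pth r u
  have hspec := take_spec (pth hT r u) h2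
  have hnodup : ((pth hT r u).takeUntil v h2).support.Nodup ∧ _ :=
    ⟨((pth_isPath hT r u).takeUntil h2).support_nodup, trivial⟩
  have hfull : (pth hT r u).support.Nodup := (pth_isPath hT r u).support_nodup
  rw [← hspec, support_append, List.nodup_append] at hfull
  have hu2 : u ∈ ((pth hT r u).dropUntil v h2).support := end_mem_support _
  rcases List.mem_cons.mp (by rwa [support_eq_cons] at hu2) with h | h
  · exact h
  · exact absurd rfl (hfull.2.2 u h1 u h)

lemma supp_pth_subset (hT : T.IsTree) {r x s : V} (h : TreeLe T r x s) :
    (pth hT x s).support ⊆ (pth hT r s).support := by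
  rw [treeLe_iff hT] at h
  rw [← dropUntil_pth hT h]
  exact support_dropUntil_subset _ h

/-- (a): if `x ≤ s` and `y` lies on the path from `x` to `s`, then `x ≤ y` (and `y ≤ s`). -/
lemma treeLe_of_mem_pth (hT : T.IsTree) {r x s y : V} (hxs : TreeLe T r x s)
    (hy : y ∈ (pth hT x s).support) : TreeLe T r x y ∧ TreeLe T r y s := by
  have hys : TreeLe T r y s := (treeLe_iff hT).2 (supp_pth_subset hT hxs hy)
  refine ⟨?_, hys⟩
  have hxs' := (treeLe_iff hT).1 hxs
  -- q := (pth r x) ++ (pth x s).takeUntil y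
  set q : T.Walk r y := (pth hT r x).append ((pth hT x s).takeUntil y hy) with hq
  have hsub : q.support.Sublist (pth hT r s).support := by
    have hspec : ((pth hT x s).takeUntil y hy).append ((pth hT x s).dropUntil y hy)
        = pth hT x s := take_spec _ hy
    have h2 : (pth hT r s).support
        = (pth hT r x).support ++ ((pth hT x s).support.tail) := by
      conv_lhs => rw [← take_spec (pth hT r s) hxs']
      rw [support_append, takeUntil_pth hT hxs', dropUntil_pth hT hxs']
    have h3 : (pth hT x s).support.tail
        = ((pth hT x s).takeUntil y hy).support.tail
          ++ ((pth hT x s).dropUntil y hy).support.tail := by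
      conv_lhs => rw [← hspec]
      rw [support_append, List.tail_append_of_ne_nil (support_ne_nil _)]
    rw [hq, support_append, h2, h3]
    exact List.Sublist.append_left (List.sublist_append_left _ _) _
  have hqpath : q.IsPath := by
    rw [isPath_def]
    exact ((pth_isPath hT r s).support_nodup).sublist hsub
  have : q = pth hT r y := pth_unique hT hqpath
  refine ⟨q, hqpath, ?_⟩
  rw [hq, mem_support_append_iff]
  exact Or.inl (end_mem_support _)

/-- (b): if `x ≤ y` and `y ≤ s` then `y` lies on the path from `x` to `s`. -/
lemma mem_pth_of_treeLe (hT : T.IsTree) {r x s y : V} (hxy : TreeLe T r x y)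
    (hys : TreeLe T r y s) : y ∈ (pth hT x s).support := by
  have hxs : TreeLe T r x s := treeLe_trans hT hxy hys
  have hxs' := (treeLe_iff hT).1 hxs
  have hys' := (treeLe_iff hT).1 hys
  rw [← dropUntil_pth hT hxs']
  rcases (mem_support_append_iff _ _).1
      (by rw [take_spec (pth hT r s) hxs']; exact hys') with h | h
  · -- y ≤ x, so y = x
    have : TreeLe T r y x := by
      rw [takeUntil_pth hT hxs'] at h
      exact (treeLe_iff hT).2 h
    have hxy' : x = y := treeLe_antisymm hT hxy this
    subst hxy'
    exact start_mem_support _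
  · exact h

/-- two ancestors of `s` are comparable -/
lemma treeLe_total (hT : T.IsTree) {r u w s : V} (hu : TreeLe T r u s)
    (hw : TreeLe T r w s) : TreeLe T r u w ∨ TreeLe T r w u := by
  have hu' := (treeLe_iff hT).1 hu
  have hw' := (treeLe_iff hT).1 hw
  rcases (mem_support_append_iff _ _).1
      (by rw [take_spec (pth hT r s) hw']; exact hu') with h | h
  · left; rw [takeUntil_pth hT hw'] at h; exact (treeLe_iff hT).2 h
  · right
    have : u ∈ (pth hT w s).support := by
      rw [← dropUntil_pth hT hw']; exact h
    exact (treeLe_of_mem_pth hT hw this).1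

lemma pth_concat (hT : T.IsTree) {r a b : V} (hadj : T.Adj a b)
    (hn : ¬ TreeLe T r b a) : pth hT r b = (pth hT r a).concat hadj := by
  refine (pth_unique hT ?_).symm
  rw [isPath_def, support_concat, List.nodup_append]
  refine ⟨(pth_isPath hT r a).support_nodup, List.nodup_singleton _, ?_⟩
  intro x hx y hy hxy
  rw [List.mem_singleton] at hy
  rw [hxy, hy] at hx
  exact hn ((treeLe_iff hT).2 hx)

lemma treeLe_adj_total (hT : T.IsTree) {r a b : V} (hadj : T.Adj a b) :
    TreeLe T r a b ∨ TreeLe T r b a := by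
  by_cases h : TreeLe T r b a
  · exact Or.inr h
  · left
    rw [treeLe_iff hT, pth_concat hT hadj h, support_concat]
    exact List.mem_append.2 (Or.inl (end_mem_support _))

lemma pth_concat_of_le (hT : T.IsTree) {r a b : V} (hadj : T.Adj a b)
    (hle : TreeLe T r a b) : pth hT r b = (pth hT r a).concat hadj := by
  refine pth_concat hT hadj fun h => ?_
  exact hadj.ne (treeLe_antisymm hT hle h)

noncomputable def tdepth (hT : T.IsTree) (r v : V) : ℕ := (pth hT r v).length

lemma tdepth_le (hT : T.IsTree) {r x y : V} (h : TreeLe T r x y) :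
    tdepth hT r x ≤ tdepth hT r y := by
  have h' := (treeLe_iff hT).1 h
  have := take_spec (pth hT r y) h'
  have hlen := congrArg Walk.length this
  rw [length_append, takeUntil_pth hT h'] at hlen
  unfold tdepth
  omega

lemma tdepth_lt (hT : T.IsTree) {r x y : V} (h : TreeLe T r x y) (hne : x ≠ y) :
    tdepth hT r x < tdepth hT r y := by
  have h' := (treeLe_iff hT).1 h
  have := take_spec (pth hT r y) h'
  have hlen := congrArg Walk.length this
  rw [length_append, takeUntil_pth hT h'] at hlen
  have : ((pth hT r y).dropUntil x h').length ≠ 0 := by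
    intro h0
    have := ((pth hT r y).dropUntil x h').eq_of_length_eq_zero h0
    exact hne this
  unfold tdepth
  omega

/-- comparable + depth le ⇒ le -/
lemma treeLe_of_comparable_depth (hT : T.IsTree) {r x y : V}
    (hcomp : TreeLe T r x y ∨ TreeLe T r y x)
    (hd : tdepth hT r x ≤ tdepth hT r y) : TreeLe T r x y := by
  rcases hcomp with h | h
  · exact h
  · by_cases hxy : y = x
    · subst hxy; exact treeLe_refl hT r _
    · exact absurd hd (by simpa using tdepth_lt hT h hxy)

/-- From connectivity of an induced subgraph, get that the tree path between
two vertices of `S` stays in `S`. -/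
lemma exists_walk_support_subset {S : Set V} (hconn : (T.induce S).Connected)
    {a b : V} (ha : a ∈ S) (hb : b ∈ S) :
    ∃ W : T.Walk a b, ∀ x ∈ W.support, x ∈ S := by
  obtain ⟨W⟩ := hconn.preconnected ⟨a, ha⟩ ⟨b, hb⟩
  refine ⟨(W.map (SimpleGraph.Embedding.induce S).toHom).copy rfl rfl, ?_⟩
  intro x hx
  change x ∈ (W.map (SimpleGraph.Embedding.induce S).toHom).support at hx
  rw [Walk.support_map] at hx
  obtain ⟨⟨y, hy⟩, _, rfl⟩ := List.mem_map.1 hx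
  exact hy

lemma supp_pth_subset_of_induce_connected (hT : T.IsTree) {S : Set V}
    (hconn : (T.induce S).Connected) {a b : V} (ha : a ∈ S) (hb : b ∈ S) :
    ∀ x ∈ (pth hT a b).support, x ∈ S := by
  obtain ⟨W, hW⟩ := exists_walk_support_subset hconn ha hb
  have : W.bypass = pth hT a b := pth_unique hT (bypass_isPath W)
  intro x hx
  rw [← this] at hx
  exact hW x (support_bypass_subset W hx)

/-- Lift a walk with support in `S` to reachability in the induced graph. -/
lemma reachable_induce_of_walk {S : Set V} {a b : V} (W : T.Walk a b)
    (hW : ∀ x ∈ W.support, x ∈ S) (ha : a ∈ S) (hb : b ∈ S) :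
    (T.induce S).Reachable ⟨a, ha⟩ ⟨b, hb⟩ := by
  induction W with
  | nil => rfl
  | @cons u c w h p ih =>
    have hc : c ∈ S := hW c (by simp)
    have : (T.induce S).Adj ⟨u, ha⟩ ⟨c, hc⟩ := by
      simp only [SimpleGraph.comap_adj, Function.Embedding.coe_subtype]
      exact h
    exact this.reachable.trans (ih (fun x hx => hW x (by simp [hx])) hc hb)

/-- the minimal-depth element of a connected set is `≤` every element. -/
lemma treeLe_of_min_depth (hT : T.IsTree) {S : Set V} {x : V} (hx : x ∈ S)
    (hmin : ∀ y ∈ S, tdepth hT r x ≤ tdepth hT r y) {a s : V}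
    (W : T.Walk a s) (hW : ∀ y ∈ W.support, y ∈ S) (hxa : TreeLe T r x a) :
    TreeLe T r x s := by
  induction W with
  | nil => exact hxa
  | @cons u c w h p ih =>
    refine ih (fun y hy => hW y (by simp [hy])) ?_
    rcases treeLe_adj_total hT (r := r) h with hle | hle
    · exact treeLe_trans hT hxa hle
    · -- c is the parent of u
      have hpth : pth hT r u = (pth hT r c).concat h.symm :=
        pth_concat_of_le hT h.symm hle
      have hxu := (treeLe_iff hT).1 hxa
      rw [hpth, support_concat, List.mem_append] at hxu
      rcases hxu with hxu | hxu
      · exact (treeLe_iff hT).2 hxu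
      · -- x = u; contradiction with minimality since c ∈ S has smaller depth
        rw [List.mem_singleton] at hxu
        subst hxu
        exfalso
        have hcx : tdepth hT r c < tdepth hT r x :=
          tdepth_lt hT hle h.ne'
        have := hmin c (hW c (by simp))
        omega


end RootedTree

section LemB
variable {V : Type*} [Fintype V] {G T : SimpleGraph V} {r : V}

lemma lemB (hN : IsNormalTreeFor G T r) :
    ∃ (m : ℕ) (D : SimpleGraph (Fin m)) (bag : Fin m → Set V),
      IsTreeDecomp G D bag ∧
        ∀ i, (bag i).ncard ≤ (⨆ v : V, (activeAncestors G T r v).ncard) + 1 := by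
  classical
  obtain ⟨hTt, hnorm⟩ := hN
  have hne : Nonempty V := hTt.isConnected.nonempty
  set n := Fintype.card V with hn
  set e : V ≃ Fin n := Fintype.equivFin V with he
  set A : V → Set V := fun v => activeAncestors G T r v with hA
  set D : SimpleGraph (Fin n) := T.comap e.symm.toEmbedding with hD
  have hiso : D ≃g T := SimpleGraph.Iso.comap e.symm T
  set bag : Fin n → Set V := fun i => insert (e.symm i) (A (e.symm i)) with hbag
  have hself : ∀ v, v ∈ bag (e v) := by
    intro v; simp [hbag]
  have hAA : ∀ {u v}, u ∈ A v → u ≠ v ∧ TreeLe T r u v ∧ ∃ z, TreeLe T r v z ∧ G.Adj u z :=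
    fun h => h
  refine ⟨n, D, bag, ⟨?_, fun v => ⟨e v, hself v⟩, ?_, ?_⟩, ?_⟩
  · -- D is a tree
    refine ⟨hiso.connected_iff.2 hTt.isConnected, ?_⟩
    intro i c hc
    exact hTt.IsAcyclic (c.map hiso.toHom)
      ((Walk.map_isCycle_iff_of_injective (p := c) (f := hiso.toHom)
        hiso.toEquiv.injective).2 hc)
  · -- edges covered
    intro u v huv
    rcases hnorm huv with hle | hle
    · refine ⟨e v, ?_, hself v⟩
      have : u ∈ A v := ⟨huv.ne, hle, v, treeLe_refl hTt r v, huv⟩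
      simp [hbag, this]
    · refine ⟨e u, hself u, ?_⟩
      have : v ∈ A u := ⟨huv.symm.ne, hle, u, treeLe_refl hTt r u, huv.symm⟩
      simp [hbag, this]
  · -- induced connectivity
    intro v
    set S : Set V := {w | v ∈ insert w (A w)} with hS
    have hvS : v ∈ S := by simp [hS]
    have hSconn : (T.induce S).Connected := by
      have hreach : ∀ w (hw : w ∈ S), (T.induce S).Reachable ⟨w, hw⟩ ⟨v, hvS⟩ := by
        intro w hw
        rcases eq_or_ne w v with rfl | hwv
        · rfl
        · have hvA : v ∈ A w := by
            rcases hw with h | h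
            · exact absurd h.symm hwv
            · exact h
          obtain ⟨hvne, hvw, z, hwz, hadj⟩ := hAA hvA
          have hsubS : ∀ x ∈ (pth hTt v w).support, x ∈ S := by
            intro x hx
            have hx' := treeLe_of_mem_pth hTt hvw hx
            rcases eq_or_ne x v with rfl | hxv
            · exact hvS
            · right
              exact ⟨fun h => hxv h.symm, hx'.1,
                z, treeLe_trans hTt hx'.2 hwz, hadj⟩
          exact (reachable_induce_of_walk (pth hTt v w) hsubS
            (hsubS v (start_mem_support _)) (hsubS w (end_mem_support _))).symm.symm
              |>.symm
      have : Nonempty {x // x ∈ S} := ⟨⟨v, hvS⟩⟩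
      refine SimpleGraph.Connected.mk fun a b => ?_
      obtain ⟨a, ha⟩ := a
      obtain ⟨b, hb⟩ := b
      exact (hreach a ha).trans (hreach b hb).symm
    -- transfer to D
    have hmem : ∀ i : Fin n, (v ∈ bag i) ↔ (e.symm i ∈ S) := by
      intro i; simp [hbag, hS]
    let hhom : (T.induce S) →g (D.induce {i | v ∈ bag i}) :=
      ⟨fun x => ⟨e x.1, by have hx := x.2; simpa [hmem] using hx⟩, by
        rintro ⟨x, hx⟩ ⟨y, hy⟩ hadj
        simp only [SimpleGraph.comap_adj, Function.Embedding.coe_subtype] at hadj ⊢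
        simpa [hD] using hadj⟩
    refine SimpleGraph.Connected.map hhom ?_ hSconn
    rintro ⟨i, hi⟩
    exact ⟨⟨e.symm i, (hmem i).1 hi⟩, Subtype.ext (e.apply_symm_apply i)⟩
  · -- sizes
    intro i
    have hnotmem : e.symm i ∉ A (e.symm i) := fun h => (hAA h).1 rfl
    rw [hbag]
    rw [Set.ncard_insert_of_notMem hnotmem (Set.toFinite _)]
    have : (A (e.symm i)).ncard ≤ ⨆ v : V, (A v).ncard :=
      le_ciSup (f := fun v => (A v).ncard)
        (Set.Finite.bddAbove (Set.finite_range _)) (e.symm i)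
    simpa [hA] using Nat.add_le_add_right this 1

end LemB

section LemC
variable {V : Type*} [Fintype V] [Nonempty V] {G : SimpleGraph V}

lemma lemC {m : ℕ} {D : SimpleGraph (Fin m)} {bag : Fin m → Set V} {k : ℕ}
    (hD : IsTreeDecomp G D bag) (hk : ∀ i, (bag i).ncard ≤ k + 1) :
    ∃ (T : SimpleGraph V) (r : V), IsNormalTreeFor G T r ∧
      (⨆ v : V, (activeAncestors G T r v).ncard) ≤ k := by
  classical
  obtain ⟨hDt, hcov, hedge, hconn⟩ := hD
  have hFm : Nonempty (Fin m) := hDt.isConnected.nonempty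
  set r0 : Fin m := Classical.arbitrary (Fin m) with hr0
  set S : V → Set (Fin m) := fun v => {i | v ∈ bag i} with hSdef
  have hSne : ∀ v, (S v).Nonempty := hcov
  have hSsupp : ∀ (v) {a b}, a ∈ S v → b ∈ S v →
      ∀ x ∈ (pth hDt a b).support, x ∈ S v := by
    intro v a b ha hb
    exact supp_pth_subset_of_induce_connected hDt (hconn v) ha hb
  -- the top bag of each vertex
  have hts : ∀ v, ∃ i ∈ S v, ∀ j ∈ S v, tdepth hDt r0 i ≤ tdepth hDt r0 j :=
    fun v => Set.exists_min_image (S v) _ (Set.toFinite _) (hSne v)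
  choose t htmem htmin using hts
  have htle : ∀ (v) {s}, s ∈ S v → TreeLe D r0 (t v) s := by
    intro v s hs
    exact treeLe_of_min_depth hDt (htmem v) (htmin v) (pth hDt (t v) s)
      (hSsupp v (htmem v) hs) (treeLe_refl hDt r0 (t v))
  -- rank
  set eF : V ≃ Fin (Fintype.card V) := Fintype.equivFin V with heF
  set nV := Fintype.card V with hnV
  set rank : V → ℕ := fun v => nV * tdepth hDt r0 (t v) + (eF v).val with hrank
  have heFlt : ∀ v, (eF v).val < nV := fun v => (eF v).2
  have hrank_dep : ∀ {a b}, rank a ≤ rank b →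
      tdepth hDt r0 (t a) ≤ tdepth hDt r0 (t b) := by
    intro a b h
    by_contra hcon
    push_neg at hcon
    have h1 : nV * (tdepth hDt r0 (t b) + 1) ≤ nV * tdepth hDt r0 (t a) :=
      Nat.mul_le_mul_left _ hcon
    have h2 := heFlt a
    have h3 := heFlt b
    simp only [hrank] at h
    nlinarith
  have hrank_inj : Function.Injective rank := by
    intro a b h
    have h1 := hrank_dep h.le
    have h2 := hrank_dep h.ge
    have hdep : tdepth hDt r0 (t a) = tdepth hDt r0 (t b) := le_antisymm h1 h2
    simp only [hrank, hdep] at h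
    have : (eF a).val = (eF b).val := by omega
    exact eF.injective (Fin.ext this)
  -- the chordal completion relation
  set Hrel : V → V → Prop := fun u z => u ≠ z ∧ ∃ i, u ∈ bag i ∧ z ∈ bag i with hHrel
  have hinbag : ∀ {u z}, Hrel u z → rank u < rank z → u ∈ bag (t z) := by
    rintro u z ⟨hne, i, hui, hzi⟩ hr
    have htu : TreeLe D r0 (t u) i := htle u hui
    have htz : TreeLe D r0 (t z) i := htle z hzi
    have hcomp := treeLe_total hDt htu htz
    have hlee : TreeLe D r0 (t u) (t z) :=
      treeLe_of_comparable_depth hDt hcomp (hrank_dep hr.le)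
    have hmem : t z ∈ (pth hDt (t u) i).support := mem_pth_of_treeLe hDt hlee htz
    exact hSsupp u (htmem u) hui _ hmem
  -- root and parent
  obtain ⟨root, hrootmin⟩ : ∃ v : V, ∀ w, rank v ≤ rank w := Finite.exists_min rank
  have hprt : ∀ v, ∃ p : V,
      (¬ (∃ u, Hrel u v ∧ rank u < rank v) → p = root) ∧
      ((∃ u, Hrel u v ∧ rank u < rank v) →
        (Hrel p v ∧ rank p < rank v ∧
          ∀ u, Hrel u v → rank u < rank v → rank u ≤ rank p)) := by
    intro v
    by_cases h : ∃ u, Hrel u v ∧ rank u < rank v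
    · obtain ⟨p, hp, hpmax⟩ :=
        Set.exists_max_image {u | Hrel u v ∧ rank u < rank v} rank (Set.toFinite _) h
      exact ⟨p, fun hc => absurd h hc,
        fun _ => ⟨hp.1, hp.2, fun u h1 h2 => hpmax u ⟨h1, h2⟩⟩⟩
    · exact ⟨root, fun _ => rfl, fun h' => absurd h' h⟩
  choose prt hprt0 hprt1 using hprt
  have hprt_rank : ∀ v, v ≠ root → rank (prt v) < rank v := by
    intro v hv
    by_cases h : ∃ u, Hrel u v ∧ rank u < rank v
    · exact (hprt1 v h).2.1
    · rw [hprt0 v h]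
      exact lt_of_le_of_ne (hrootmin v) fun hc => hv (hrank_inj hc).symm
  set T : SimpleGraph V := SimpleGraph.fromRel (fun a b => a ≠ root ∧ b = prt a) with hT
  have hTadj : ∀ {a b}, T.Adj a b ↔
      a ≠ b ∧ ((a ≠ root ∧ b = prt a) ∨ (b ≠ root ∧ a = prt b)) := by
    intro a b; rw [hT, SimpleGraph.fromRel_adj]
  have hTadj_of : ∀ {a b}, T.Adj a b → rank b < rank a → a ≠ root ∧ b = prt a := by
    intro a b hadj hr
    rcases (hTadj.1 hadj).2 with h | h
    · exact h
    · exact absurd (h.2 ▸ hprt_rank b h.1) (by omega)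
  have hadj_prt : ∀ v, v ≠ root → T.Adj v (prt v) := by
    intro v hv
    have hne' : v ≠ prt v := fun hc => by
      have h1 := hprt_rank v hv
      rw [← hc] at h1
      exact lt_irrefl _ h1
    exact hTadj.2 ⟨hne', Or.inl ⟨hv, rfl⟩⟩
  -- connectedness
  have hreach : ∀ n v, rank v < n → T.Reachable v root := by
    intro n
    induction n with
    | zero => exact fun v hv => absurd hv (Nat.not_lt_zero _)
    | succ n ih =>
      intro v hv
      by_cases hvr : v = root
      · exact hvr ▸ Reachable.refl v
      · exact ((hadj_prt v hvr).reachable).trans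
          (ih (prt v) (by have := hprt_rank v hvr; omega))
  have hTconn : T.Connected :=
    SimpleGraph.Connected.mk fun a b =>
      (hreach (rank a + 1) a (Nat.lt_succ_self _)).trans
        (hreach (rank b + 1) b (Nat.lt_succ_self _)).symm
  -- acyclicity
  have hTacyc : T.IsAcyclic := by
    intro v c hc
    obtain ⟨u, hu, humax⟩ := Set.exists_max_image {y | y ∈ c.support} rank
      (Set.toFinite _) ⟨v, c.start_mem_support⟩
    set c' := c.rotate u hu with hc'def
    have hcyc' : c'.IsCycle := hc.rotate hu
    have hsup' : ∀ y ∈ c'.support, rank y ≤ rank u := by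
      intro y hy
      rcases List.mem_cons.1 (by rwa [support_eq_cons] at hy) with rfl | hy'
      · exact le_refl _
      · refine humax y ?_
        have hperm := support_rotate c u hu
        have : y ∈ c.support.tail := hperm.mem_iff.1 hy'
        have hcs := c.support_eq_cons
        rw [hcs]
        exact List.mem_cons_of_mem _ this
    obtain ⟨b, hadj, q, hq⟩ := Walk.not_nil_iff.1 hcyc'.not_nil
    have hbu : b ≠ u := fun hc => hadj.ne (hc ▸ rfl)
    have hbsup : b ∈ c'.support := by
      rw [hq, support_cons]
      exact List.mem_cons_of_mem _ q.start_mem_support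
    have hb : b = prt u :=
      (hTadj_of hadj (lt_of_le_of_ne (hsup' b hbsup) fun hc => hbu (hrank_inj hc))).2
    have hqrnil : ¬ q.reverse.Nil := Walk.not_nil_of_ne fun hc => hbu hc.symm
    obtain ⟨y, hadj2, q2, hq2⟩ := Walk.not_nil_iff.1 hqrnil
    have hyu : y ≠ u := hadj2.ne'
    have hysup : y ∈ c'.support := by
      have : y ∈ q.reverse.support := by
        rw [hq2, support_cons]
        exact List.mem_cons_of_mem _ q2.start_mem_support
      rw [support_reverse, List.mem_reverse] at this
      rw [hq, support_cons]
      exact List.mem_cons_of_mem _ this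
    have hy : y = prt u :=
      (hTadj_of hadj2 (lt_of_le_of_ne (hsup' y hysup) fun hc => hyu (hrank_inj hc))).2
    have hedge1 : s(u, y) ∈ q.edges := by
      have : s(u, y) ∈ q.reverse.edges := by
        rw [hq2, edges_cons]
        exact List.mem_cons_self
      rwa [edges_reverse, List.mem_reverse] at this
    have hnodup : c'.edges.Nodup := hcyc'.isCircuit.isTrail.edges_nodup
    rw [hq, edges_cons] at hnodup
    rw [hy, ← hb] at hedge1
    exact (List.nodup_cons.1 hnodup).1 (Sym2.eq_swap ▸ hedge1)
  have hTt : T.IsTree := ⟨hTconn, hTacyc⟩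
  -- structure of root paths in T
  have hrank_supp : ∀ n v, rank v < n →
      ∀ x ∈ (pth hTt root v).support, rank x ≤ rank v := by
    intro n
    induction n with
    | zero => exact fun v hv => absurd hv (Nat.not_lt_zero _)
    | succ n ih =>
      intro v hv x hx
      by_cases hvr : v = root
      · subst hvr
        rw [pth_self hTt] at hx
        simp only [Walk.support_nil, List.mem_singleton] at hx
        exact hx ▸ le_refl _
      · have hadjp : T.Adj (prt v) v := (hadj_prt v hvr).symm
        have hnle : ¬ TreeLe T root v (prt v) := by
          intro hle
          have := ih (prt v) (by have := hprt_rank v hvr; omega) v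
            ((treeLe_iff hTt).1 hle)
          have := hprt_rank v hvr
          omega
        rw [pth_concat hTt hadjp hnle, support_concat,
          List.mem_append] at hx
        rcases hx with hx | hx
        · have h1 := ih (prt v) (by have := hprt_rank v hvr; omega) x hx
          have h2 := hprt_rank v hvr
          omega
        · rw [List.mem_singleton] at hx
          exact hx ▸ le_refl _
  have hpth_eq : ∀ v (hvr : v ≠ root),
      pth hTt root v = (pth hTt root (prt v)).concat (hadj_prt v hvr).symm := by
    intro v hvr
    refine pth_concat hTt _ fun hle => ?_
    have h1 := hrank_supp (rank (prt v) + 1) (prt v) (Nat.lt_succ_self _) v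
      ((treeLe_iff hTt).1 hle)
    have h2 := hprt_rank v hvr
    omega
  have htle_rank : ∀ {u v}, TreeLe T root u v → rank u ≤ rank v := by
    intro u v h
    exact hrank_supp (rank v + 1) v (Nat.lt_succ_self _) u ((treeLe_iff hTt).1 h)
  have htle_rank_lt : ∀ {u v}, TreeLe T root u v → u ≠ v → rank u < rank v :=
    fun h hne => lt_of_le_of_ne (htle_rank h) fun hc => hne (hrank_inj hc)
  have hprt_le : ∀ v (hvr : v ≠ root), TreeLe T root (prt v) v := by
    intro v hvr
    rw [treeLe_iff hTt, hpth_eq v hvr, support_concat,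
      List.mem_append]
    exact Or.inl (end_mem_support _)
  have hle_prt : ∀ {v z}, TreeLe T root v z → v ≠ z → (hzr : z ≠ root) →
      TreeLe T root v (prt z) := by
    intro v z hvz hne hzr
    have := (treeLe_iff hTt).1 hvz
    rw [hpth_eq z hzr, support_concat, List.mem_append] at this
    rcases this with h | h
    · exact (treeLe_iff hTt).2 h
    · rw [List.mem_singleton] at h
      exact absurd h hne
  -- ancestry of earlier neighbours
  have hanc : ∀ n v, rank v < n → ∀ u, Hrel u v → rank u < rank v →
      TreeLe T root u v := by
    intro n
    induction n with
    | zero => exact fun v hv => absurd hv (Nat.not_lt_zero _)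
    | succ n ih =>
      intro v hv u hH hr
      have hex : ∃ u', Hrel u' v ∧ rank u' < rank v := ⟨u, hH, hr⟩
      obtain ⟨hHp, hrp, hmax⟩ := hprt1 v hex
      have hvroot : v ≠ root := by
        rintro rfl
        exact absurd (lt_of_le_of_lt (hrootmin u) hr) (lt_irrefl _)
      have hplev : TreeLe T root (prt v) v := hprt_le v hvroot
      by_cases hup : u = prt v
      · exact hup ▸ hplev
      · have h1 : rank u < rank (prt v) :=
          lt_of_le_of_ne (hmax u hH hr) fun h => hup (hrank_inj h)
        have h2 : Hrel u (prt v) := ⟨hup, t v, hinbag hH hr, hinbag hHp hrp⟩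
        exact treeLe_trans hTt (ih (prt v) (by omega) u h2 h1) hplev
  have hnormal : IsNormalTreeFor G T root := by
    refine ⟨hTt, fun u v huv => ?_⟩
    have hH : Hrel u v := ⟨huv.ne, hedge huv⟩
    rcases Ne.lt_or_gt (fun h : rank u = rank v => huv.ne (hrank_inj h)) with h | h
    · exact Or.inl (hanc (rank v + 1) v (Nat.lt_succ_self _) u hH h)
    · exact Or.inr (hanc (rank u + 1) u (Nat.lt_succ_self _) v
        ⟨huv.ne.symm, (hH.2).imp fun i hi => ⟨hi.2, hi.1⟩⟩ h)
  -- active ancestors lie in the top bag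
  have habound : ∀ n z, rank z < n → ∀ u v, TreeLe T root u v → u ≠ v →
      TreeLe T root v z → Hrel u z → u ∈ bag (t v) := by
    intro n
    induction n with
    | zero => exact fun z hz => absurd hz (Nat.not_lt_zero _)
    | succ n ih =>
      intro z hz u v huv hne hvz hH
      by_cases hzv : z = v
      · subst hzv
        exact hinbag hH (htle_rank_lt huv hne)
      · have hvnez : v ≠ z := fun h => hzv h.symm
        have hzroot : z ≠ root := by
          rintro rfl
          exact hzv (treeLe_root hTt hvz).symm
        have huz : TreeLe T root u z := treeLe_trans hTt huv hvz
        have hunez : u ≠ z := by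
          rintro rfl
          exact hne (treeLe_antisymm hTt huv hvz)
        have hruz : rank u < rank z := htle_rank_lt huz hunez
        have hex : ∃ u', Hrel u' z ∧ rank u' < rank z := ⟨u, hH, hruz⟩
        obtain ⟨hHp, hrp, hmax⟩ := hprt1 z hex
        have hvp : TreeLe T root v (prt z) := hle_prt hvz hvnez hzroot
        have hup : u ≠ prt z := by
          rintro rfl
          exact hne (treeLe_antisymm hTt huv hvp)
        have hH2 : Hrel u (prt z) := ⟨hup, t z, hinbag hH hruz, hinbag hHp hrp⟩
        exact ih (prt z) (by omega) u v huv hne hvp hH2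
  have hbound : ∀ v, (activeAncestors G T root v).ncard ≤ k := by
    intro v
    have hsub : insert v (activeAncestors G T root v) ⊆ bag (t v) := by
      intro u hu
      rcases Set.mem_insert_iff.1 hu with rfl | ⟨hne, hle, z, hvz, hadj⟩
      · exact htmem u
      · exact habound (rank z + 1) z (Nat.lt_succ_self _) u v hle hne hvz
          ⟨hadj.ne, hedge hadj⟩
    have h1 : v ∉ activeAncestors G T root v := fun h => h.1 rfl
    have h2 := Set.ncard_le_ncard hsub (Set.toFinite _)
    rw [Set.ncard_insert_of_notMem h1 (Set.toFinite _)] at h2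
    have h3 := hk (t v)
    omega
  exact ⟨T, root, hnormal, ciSup_le hbound⟩


end LemC

section Main
variable {V : Type*} [Fintype V] (G : SimpleGraph V)

lemma trivialDecomp :
    (Fintype.card V) ∈ {k | ∃ (m : ℕ) (T : SimpleGraph (Fin m)) (bag : Fin m → Set V),
      IsTreeDecomp G T bag ∧ ∀ i, (bag i).ncard ≤ k + 1} := by
  classical
  refine ⟨1, ⊥, fun _ => Set.univ, ⟨⟨?_, ?_⟩, ?_, ?_, ?_⟩, ?_⟩
  · refine SimpleGraph.Connected.mk fun a b => ?_
    rw [Subsingleton.elim a b]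
  · intro v c hc
    cases c with
    | nil => exact hc.ne_nil rfl
    | cons h _ => exact absurd h (by simp)
  · exact fun v => ⟨0, trivial⟩
  · exact fun u v _ => ⟨0, trivial, trivial⟩
  · intro v
    have : Nonempty {i : Fin 1 | v ∈ (Set.univ : Set V)} := ⟨⟨0, trivial⟩⟩
    refine SimpleGraph.Connected.mk fun a b => ?_
    rw [Subsingleton.elim a b]
  · intro i
    rw [Set.ncard_univ, Nat.card_eq_fintype_card]
    omega

theorem treewidth_eq_min_normal_tree' :
    treewidth G = sInf {w | ∃ (T : SimpleGraph V) (r : V),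
      IsNormalTreeFor G T r ∧ w = ⨆ v : V, (activeAncestors G T r v).ncard} := by
  classical
  cases isEmpty_or_nonempty V with
  | inl hemp =>
    have hempty : {w | ∃ (T : SimpleGraph V) (r : V),
        IsNormalTreeFor G T r ∧ w = ⨆ v : V, (activeAncestors G T r v).ncard} = ∅ := by
      rw [Set.eq_empty_iff_forall_notMem]
      rintro w ⟨T, r, ⟨hTt, -⟩, -⟩
      exact (IsEmpty.false r)
    rw [hempty, Nat.sInf_empty]
    have h0 : 0 ∈ {k | ∃ (m : ℕ) (T : SimpleGraph (Fin m)) (bag : Fin m → Set V),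
        IsTreeDecomp G T bag ∧ ∀ i, (bag i).ncard ≤ k + 1} := by
      have := trivialDecomp G
      rwa [Fintype.card_eq_zero] at this
    rw [treewidth]
    exact le_antisymm (Nat.sInf_le h0) (Nat.zero_le _)
  | inr hne =>
    set RHS := {w | ∃ (T : SimpleGraph V) (r : V),
      IsNormalTreeFor G T r ∧ w = ⨆ v : V, (activeAncestors G T r v).ncard} with hRHS
    have h1 : {k | ∃ (m : ℕ) (T : SimpleGraph (Fin m)) (bag : Fin m → Set V),
        IsTreeDecomp G T bag ∧ ∀ i, (bag i).ncard ≤ k + 1}.Nonempty :=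
      ⟨Fintype.card V, trivialDecomp G⟩
    have htw : treewidth G ∈ {k | ∃ (m : ℕ) (T : SimpleGraph (Fin m))
        (bag : Fin m → Set V), IsTreeDecomp G T bag ∧ ∀ i, (bag i).ncard ≤ k + 1} := by
      rw [treewidth]
      exact Nat.sInf_mem h1
    obtain ⟨m, D, bagf, hD, hk'⟩ := htw
    obtain ⟨T, r, hN, hle⟩ := lemC hD hk'
    have hwmem : (⨆ v : V, (activeAncestors G T r v).ncard) ∈ RHS := ⟨T, r, hN, rfl⟩
    have h2 : sInf RHS ≤ treewidth G := le_trans (Nat.sInf_le hwmem) hle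
    obtain ⟨T2, r2, hN2, heq⟩ := Nat.sInf_mem ⟨_, hwmem⟩
    obtain ⟨m2, D2, bag2, hdec, hsz⟩ := lemB hN2
    have h3 : treewidth G ≤ sInf RHS := by
      rw [treewidth]
      refine Nat.sInf_le ⟨m2, D2, bag2, hdec, fun i => ?_⟩
      rw [heq]
      exact hsz i
    exact le_antisymm h3 h2

end Main

/-- Kloks' characterisation: the treewidth of `G` equals the minimum, over all
normal trees `T` for `G`, of `max_v a_T(v)`. -/
theorem treewidth_eq_min_normal_tree {V : Type*} [Fintype V] (G : SimpleGraph V) :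
    treewidth G = sInf {w | ∃ (T : SimpleGraph V) (r : V),
      IsNormalTreeFor G T r ∧ w = ⨆ v : V, (activeAncestors G T r v).ncard} := by
  exact treewidth_eq_min_normal_tree' G
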